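/- arXiv:2509.08096 — 2 statements merged into one kernel-verified Lean document; each statement's English description precedes it below -/
import Mathlib

section
/- In the simple jump diffusion model, the difference between the variance swap rate and the squared VIX equals 2λ(1 + J + J²/2 − e^J); using the power series of e^J, this equals −2λ·Σ_{k≥3} J^k/k!, so its third-order Taylor approximation in J is −λJ³/3. -/
open Real Filter

/-- In the simple jump diffusion, the difference between the variance swap
rate `σ² + λJ²` and the squared VIX `σ² − 2λ(1 + J − e^J)` equals
`2λ(1 + J + J²/2 − e^J)`; by the power series of `e^J` this equals
`−2λ·Σ_{k≥3} J^k/k!`, and its third-order Taylor approximation in `J` is `−λJ³/3`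
(i.e. `2λ(1+J+J²/2−e^J)/J³ → −λ/3` as `J → 0`). -/
theorem sjd_vs_vix_gap (σ lam : ℝ) :
    (∀ J : ℝ,
      (σ ^ 2 + lam * J ^ 2) - (σ ^ 2 - 2 * lam * (1 + J - exp J)) =
        2 * lam * (1 + J + J ^ 2 / 2 - exp J)) ∧
    (∀ J : ℝ,
      2 * lam * (1 + J + J ^ 2 / 2 - exp J) =
        -2 * lam * ∑' k : ℕ, J ^ (k + 3) / (Nat.factorial (k + 3) : ℝ)) ∧
    Tendsto (fun J : ℝ => 2 * lam * (1 + J + J ^ 2 / 2 - exp J) / J ^ 3)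
      (nhdsWithin 0 {0}ᶜ) (nhds (-lam / 3)) := by
  refine ⟨fun J => by ring, fun J => ?_, ?_⟩
  · have hsum : Summable (fun n : ℕ => J ^ n / (Nat.factorial n : ℝ)) :=
      Real.summable_pow_div_factorial J
    have hexp : Real.exp J = ∑' n : ℕ, J ^ n / (Nat.factorial n : ℝ) := by
      rw [Real.exp_eq_exp_ℝ, NormedSpace.exp_eq_tsum_div]
    have hshift := Summable.sum_add_tsum_nat_add 3 hsum
    have : (∑ i ∈ Finset.range 3, J ^ i / (Nat.factorial i : ℝ)) = 1 + J + J ^ 2 / 2 := by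
      simp [Finset.sum_range_succ, Nat.factorial]
    rw [hexp, ← hshift, this]
    ring
  · -- limit
    have key : ∀ᶠ J in nhdsWithin (0:ℝ) {0}ᶜ,
        2 * lam * (1 + J + J ^ 2 / 2 - exp J) / J ^ 3
          = -lam / 3 - 2 * lam * ((exp J - ∑ m ∈ Finset.range 4, J ^ m / (Nat.factorial m : ℝ)) / J ^ 3) := by
      filter_upwards [self_mem_nhdsWithin] with J hJ
      have hJ0 : J ≠ 0 := hJ
      have hsum4 : (∑ m ∈ Finset.range 4, J ^ m / (Nat.factorial m : ℝ))
          = 1 + J + J ^ 2 / 2 + J ^ 3 / 6 := by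
        simp [Finset.sum_range_succ, Nat.factorial]
      rw [hsum4]
      field_simp
      ring
    rw [tendsto_congr' key]
    have hlim : Tendsto (fun J : ℝ =>
        (exp J - ∑ m ∈ Finset.range 4, J ^ m / (Nat.factorial m : ℝ)) / J ^ 3)
        (nhdsWithin 0 {0}ᶜ) (nhds 0) := by
      have hb : ∀ᶠ J in nhdsWithin (0:ℝ) {0}ᶜ,
          ‖(exp J - ∑ m ∈ Finset.range 4, J ^ m / (Nat.factorial m : ℝ)) / J ^ 3‖
            ≤ |J| := by
        have h1 : ∀ᶠ J in nhdsWithin (0:ℝ) {0}ᶜ, |J| ≤ 1 := by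
          apply eventually_nhdsWithin_of_eventually_nhds
          filter_upwards [Metric.ball_mem_nhds (0:ℝ) one_pos] with J hJ
          exact le_of_lt (by simpa [Real.dist_eq] using hJ)
        filter_upwards [h1] with J hJ1
        have hbound := Real.exp_bound hJ1 (n := 4) (by norm_num)
        rw [norm_div, norm_pow, Real.norm_eq_abs, Real.norm_eq_abs]
        rcases eq_or_ne J 0 with h | h
        · simp [h]
        · rw [div_le_iff₀ (by positivity)]
          calc |exp J - ∑ m ∈ Finset.range 4, J ^ m / (Nat.factorial m : ℝ)|
              ≤ |J| ^ 4 * ((4:ℕ).succ / ((Nat.factorial 4 : ℝ) * 4)) := hbound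
            _ ≤ |J| ^ 4 * 1 := by
                gcongr
                norm_num [Nat.factorial]
            _ = |J| * |J| ^ 3 := by ring
      have habs : Tendsto (fun J : ℝ => |J|) (nhdsWithin 0 {0}ᶜ) (nhds 0) := by
        have : Tendsto (fun J : ℝ => |J|) (nhds 0) (nhds 0) := by
          simpa using continuous_abs.tendsto (0:ℝ)
        exact this.mono_left nhdsWithin_le_nhds
      exact squeeze_zero_norm' hb habs
    have : Tendsto (fun J : ℝ =>
        -lam / 3 - 2 * lam * ((exp J - ∑ m ∈ Finset.range 4, J ^ m / (Nat.factorial m : ℝ)) / J ^ 3))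
        (nhdsWithin 0 {0}ᶜ) (nhds (-lam / 3 - 2 * lam * 0)) :=
      tendsto_const_nhds.sub ((tendsto_const_nhds.mul hlim))
    simpa using this
end

section
/- For μ > −1, log(1+μ) − μ ≤ 0 with equality iff μ = 0; hence in the Bates model with λ > 0 and σ_J = 0, the sign of VS(τ) − VIX²(τ) = 2λ(log(1+μ_J) − μ_J + (1/2)log²(1+μ_J)) is determined by the function g(μ) = log(1+μ) − μ + (1/2)log²(1+μ), which satisfies g(μ) > 0 for −1 < μ < 0 and g(μ) < 0 for μ > 0. -/
open Real

private noncomputable def hfun (x : ℝ) : ℝ := Real.exp x - 1 - x - x ^ 2 / 2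

private lemma hfun_deriv (x : ℝ) : HasDerivAt hfun (Real.exp x - 1 - x) x := by
  have := ((Real.hasDerivAt_exp x).sub (hasDerivAt_const x 1)).sub (hasDerivAt_id x)
  have h2 : HasDerivAt (fun y : ℝ => y ^ 2 / 2) x x := by
    have := (hasDerivAt_pow 2 x).div_const 2
    simpa using this
  have h3 := this.sub h2
  simp only [sub_zero] at h3
  exact h3.congr_of_eventuallyEq (Filter.Eventually.of_forall fun y => by simp [hfun])

private lemma hfun_pos {x : ℝ} (hx : 0 < x) : 0 < hfun x := by
  have hmono : StrictMonoOn hfun (Set.Ici (0 : ℝ)) := by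
    apply strictMonoOn_of_deriv_pos (convex_Ici 0)
      (Continuous.continuousOn (by unfold hfun; continuity))
    intro y hy
    rw [(hfun_deriv y).deriv]
    simp only [interior_Ici, Set.mem_Ioi] at hy
    have := Real.add_one_lt_exp (ne_of_gt hy)
    linarith
  have := hmono (Set.self_mem_Ici) (Set.mem_Ici.2 hx.le) hx
  simpa [hfun] using this

private lemma hfun_neg {x : ℝ} (hx : x < 0) : hfun x < 0 := by
  have hmono : StrictMonoOn hfun (Set.Iic (0 : ℝ)) := by
    apply strictMonoOn_of_deriv_pos (convex_Iic 0)
      (Continuous.continuousOn (by unfold hfun; continuity))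
    intro y hy
    rw [(hfun_deriv y).deriv]
    simp only [interior_Iic, Set.mem_Iio] at hy
    have := Real.add_one_lt_exp (ne_of_lt hy)
    linarith
  have := hmono (Set.mem_Iic.2 hx.le) (Set.self_mem_Iic) hx
  simpa [hfun] using this

/-- For `μ > −1`, `log(1+μ) − μ ≤ 0` with equality iff `μ = 0`; and the
function `g(μ) = log(1+μ) − μ + (1/2)log²(1+μ)`, which determines the sign of
`VS(τ) − VIX²(τ) = 2λ·g(μ_J)` in the Bates model with deterministic jumps, satisfies
`g(μ) > 0` for `−1 < μ < 0` and `g(μ) < 0` for `μ > 0`. -/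
theorem bates_deterministic_jump_gap_sign :
    (∀ μ : ℝ, -1 < μ → Real.log (1 + μ) - μ ≤ 0) ∧
    (∀ μ : ℝ, -1 < μ → (Real.log (1 + μ) - μ = 0 ↔ μ = 0)) ∧
    (∀ μ : ℝ, -1 < μ → μ < 0 →
      0 < Real.log (1 + μ) - μ + (1 / 2) * (Real.log (1 + μ)) ^ 2) ∧
    (∀ μ : ℝ, 0 < μ →
      Real.log (1 + μ) - μ + (1 / 2) * (Real.log (1 + μ)) ^ 2 < 0) := by
  refine ⟨?_, ?_, ?_, ?_⟩
  · intro μ hμ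
    have hpos : 0 < 1 + μ := by linarith
    have := Real.log_le_sub_one_of_pos hpos
    linarith
  · intro μ hμ
    have hpos : 0 < 1 + μ := by linarith
    constructor
    · intro h
      by_contra hne
      have hne' : 1 + μ ≠ 1 := by intro h'; apply hne; linarith
      have := Real.log_lt_sub_one_of_pos hpos hne'
      linarith
    · intro h; simp [h]
  · intro μ hμ hμ0
    have hpos : 0 < 1 + μ := by linarith
    set x := Real.log (1 + μ) with hx
    have hexp : Real.exp x = 1 + μ := Real.exp_log hpos
    have hxneg : x < 0 := by
      rw [hx]
      exact Real.log_neg hpos (by linarith)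
    have := hfun_neg hxneg
    simp only [hfun] at this
    nlinarith
  · intro μ hμ
    have hpos : 0 < 1 + μ := by linarith
    set x := Real.log (1 + μ) with hx
    have hexp : Real.exp x = 1 + μ := Real.exp_log hpos
    have hxpos : 0 < x := by
      rw [hx]
      exact Real.log_pos (by linarith)
    have := hfun_pos hxpos
    simp only [hfun] at this
    nlinarith
end
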